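/- Let K > 0, θ₀ = arctan(2K), and let r_X, r_Y ∈ (0, π/2 − θ₀]. Let d_x, d_y > 0 satisfy coth d_x = sin(r_X + θ₀)/sin θ₀ and coth d_y = sin(r_Y + θ₀)/sin θ₀. Let D ∈ (0, π), and let d_xy > 0 satisfy the hyperbolic law of cosines cosh d_xy = cosh d_x cosh d_y − sinh d_x sinh d_y cos D. Define ψ ∈ [0, π/2] by sin ψ = √(sin r_X · sin(r_X + 2θ₀))/cos θ₀ and cos ψ = cos(r_X + θ₀)/cos θ₀, and define Ξ ∈ [0, π] by sin Ξ = sinh d_y sin D / sinh d_xy and cos Ξ = (cosh d_y − cosh d_x cosh d_xy)/(sinh d_x sinh d_xy). Then sin(Ξ − ψ) = 2 sin((D − r_X + r_Y)/2) · (cos((r_X + r_Y − D)/2 + θ₀)/(cos θ₀ sin θ₀)) · √( sin r_X · sin(r_X + 2θ₀) / (s_X² + s_Y² − 2 s_X s_Y cos D − sin² D) ), where s_X = sin(r_X + θ₀)/sin θ₀ and s_Y = sin(r_Y + θ₀)/sin θ₀. -/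

import Mathlib

private lemma sq_eq_of_pos {x y : ℝ} (hx : 0 < x) (hy : 0 < y) (h : x ^ 2 = y ^ 2) : x = y := by
  rw [← Real.sqrt_sq hx.le, h, Real.sqrt_sq hy.le]

set_option maxHeartbeats 2000000 in


/-- The Hyperbolic Entailment Cone energy in Disk Embedding form: with
`K > 0`, `θ₀ = arctan(2K)`, disk radii `r_X, r_Y ∈ (0, π/2 − θ₀]`, distances
`d_x, d_y > 0` from the origin satisfying `coth d_x = sin(r_X + θ₀)/sin θ₀` and
`coth d_y = sin(r_Y + θ₀)/sin θ₀`, angle `D ∈ (0, π)` at the origin, and opposite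
side `d_xy > 0` given by the hyperbolic law of cosines, the aperture angle `ψ` and
the angle `Ξ` satisfy
`sin(Ξ − ψ) = 2 sin((D − r_X + r_Y)/2) · (cos((r_X + r_Y − D)/2 + θ₀)/(cos θ₀ sin θ₀))
  · √(sin r_X sin(r_X + 2θ₀) / (s_X² + s_Y² − 2 s_X s_Y cos D − sin² D))`,
where `s_X = sin(r_X + θ₀)/sin θ₀` and `s_Y = sin(r_Y + θ₀)/sin θ₀`. -/
theorem hyperbolic_cone_energy_disk_form (K : ℝ) (hK : 0 < K) (θ₀ : ℝ)
    (hθ₀ : θ₀ = Real.arctan (2 * K)) (rX rY : ℝ)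
    (hrX : rX ∈ Set.Ioc 0 (Real.pi / 2 - θ₀))
    (hrY : rY ∈ Set.Ioc 0 (Real.pi / 2 - θ₀))
    (dx dy : ℝ) (hdx : 0 < dx) (hdy : 0 < dy)
    (hcothx : Real.cosh dx / Real.sinh dx = Real.sin (rX + θ₀) / Real.sin θ₀)
    (hcothy : Real.cosh dy / Real.sinh dy = Real.sin (rY + θ₀) / Real.sin θ₀)
    (D : ℝ) (hD : D ∈ Set.Ioo 0 Real.pi) (dxy : ℝ) (hdxy : 0 < dxy)
    (hlaw : Real.cosh dxy =
      Real.cosh dx * Real.cosh dy - Real.sinh dx * Real.sinh dy * Real.cos D)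
    (ψ : ℝ) (hψmem : ψ ∈ Set.Icc 0 (Real.pi / 2))
    (hψsin : Real.sin ψ =
      Real.sqrt (Real.sin rX * Real.sin (rX + 2 * θ₀)) / Real.cos θ₀)
    (hψcos : Real.cos ψ = Real.cos (rX + θ₀) / Real.cos θ₀)
    (Ξ : ℝ) (hΞmem : Ξ ∈ Set.Icc 0 Real.pi)
    (hΞsin : Real.sin Ξ = Real.sinh dy * Real.sin D / Real.sinh dxy)
    (hΞcos : Real.cos Ξ =
      (Real.cosh dy - Real.cosh dx * Real.cosh dxy) / (Real.sinh dx * Real.sinh dxy)) :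
    Real.sin (Ξ - ψ) =
      2 * Real.sin ((D - rX + rY) / 2) *
        (Real.cos ((rX + rY - D) / 2 + θ₀) / (Real.cos θ₀ * Real.sin θ₀)) *
        Real.sqrt (Real.sin rX * Real.sin (rX + 2 * θ₀) /
          ((Real.sin (rX + θ₀) / Real.sin θ₀) ^ 2 +
            (Real.sin (rY + θ₀) / Real.sin θ₀) ^ 2 -
            2 * (Real.sin (rX + θ₀) / Real.sin θ₀) *
              (Real.sin (rY + θ₀) / Real.sin θ₀) * Real.cos D -
            Real.sin D ^ 2)) := by
  obtain ⟨hrX0, hrX1⟩ := hrX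
  obtain ⟨hrY0, hrY1⟩ := hrY
  obtain ⟨hD0, hD1⟩ := hD
  have hpi := Real.pi_pos
  have hθpos : 0 < θ₀ := by
    rw [hθ₀, ← Real.arctan_zero]
    exact Real.arctan_strictMono (by positivity)
  have hθlt : θ₀ < Real.pi / 2 := hθ₀ ▸ Real.arctan_lt_pi_div_two _
  have hs : 0 < Real.sin θ₀ := Real.sin_pos_of_pos_of_lt_pi hθpos (by linarith)
  have hc : 0 < Real.cos θ₀ := Real.cos_pos_of_mem_Ioo ⟨by linarith, hθlt⟩
  have hsinrX : 0 < Real.sin rX := Real.sin_pos_of_pos_of_lt_pi hrX0 (by linarith)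
  have hsinrX2 : 0 < Real.sin (rX + 2 * θ₀) :=
    Real.sin_pos_of_pos_of_lt_pi (by linarith) (by linarith)
  have hsinrY : 0 < Real.sin rY := Real.sin_pos_of_pos_of_lt_pi hrY0 (by linarith)
  have hsinrY2 : 0 < Real.sin (rY + 2 * θ₀) :=
    Real.sin_pos_of_pos_of_lt_pi (by linarith) (by linarith)
  -- key: sin r · sin(r+2θ₀) = sin²(r+θ₀) − sin²θ₀
  have sinsq : ∀ r : ℝ, Real.sin r * Real.sin (r + 2 * θ₀)
      = Real.sin (r + θ₀) ^ 2 - Real.sin θ₀ ^ 2 := by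
    intro r
    have e1 : Real.sin (r + 2 * θ₀) = Real.sin ((r + θ₀) + θ₀) := by ring_nf
    have e2 : Real.sin r = Real.sin ((r + θ₀) - θ₀) := by ring_nf
    rw [e1, e2, Real.sin_add, Real.sin_sub]
    have h1 := Real.sin_sq_add_cos_sq (r + θ₀)
    have h2 := Real.sin_sq_add_cos_sq θ₀
    linear_combination Real.sin (r + θ₀) ^ 2 * h2 - Real.sin θ₀ ^ 2 * h1
  set a := Real.sin (rX + θ₀) with ha
  set b := Real.sin (rY + θ₀) with hb
  set s := Real.sin θ₀ with hsdef
  set c := Real.cos θ₀ with hcdef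
  set px := Real.sqrt (Real.sin rX * Real.sin (rX + 2 * θ₀)) with hpx
  have hpxpos : 0 < px := Real.sqrt_pos.mpr (by positivity)
  have hpx2 : px ^ 2 = Real.sin rX * Real.sin (rX + 2 * θ₀) :=
    Real.sq_sqrt (by positivity)
  set py := Real.sqrt (Real.sin rY * Real.sin (rY + 2 * θ₀)) with hpy
  have hpypos : 0 < py := Real.sqrt_pos.mpr (by positivity)
  have hpy2 : py ^ 2 = Real.sin rY * Real.sin (rY + 2 * θ₀) :=
    Real.sq_sqrt (by positivity)
  have hax : a ^ 2 - s ^ 2 = px ^ 2 := by rw [hpx2, sinsq rX]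
  have hay : b ^ 2 - s ^ 2 = py ^ 2 := by rw [hpy2, sinsq rY]
  have hsx : 0 < Real.sinh dx := Real.sinh_pos_iff.mpr hdx
  have hsy : 0 < Real.sinh dy := Real.sinh_pos_iff.mpr hdy
  have hsz : 0 < Real.sinh dxy := Real.sinh_pos_iff.mpr hdxy
  rw [div_eq_div_iff hsx.ne' hs.ne'] at hcothx
  rw [div_eq_div_iff hsy.ne' hs.ne'] at hcothy
  have hchx := Real.cosh_sq dx
  have hchy := Real.cosh_sq dy
  have hchz := Real.cosh_sq dxy
  -- sinh dx = s / px
  have hsxval : Real.sinh dx = s / px := by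
    have h2 : (Real.sinh dx * px) ^ 2 = s ^ 2 := by
      linear_combination (-(Real.sinh dx ^ 2)) * hax + s ^ 2 * hchx -
        (Real.cosh dx * s + a * Real.sinh dx) * hcothx
    have h3 : Real.sinh dx * px = s := sq_eq_of_pos (mul_pos hsx hpxpos) hs h2
    field_simp
    linarith [h3]
  have hsyval : Real.sinh dy = s / py := by
    have h2 : (Real.sinh dy * py) ^ 2 = s ^ 2 := by
      linear_combination (-(Real.sinh dy ^ 2)) * hay + s ^ 2 * hchy -
        (Real.cosh dy * s + b * Real.sinh dy) * hcothy
    have h3 : Real.sinh dy * py = s := sq_eq_of_pos (mul_pos hsy hpypos) hs h2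
    field_simp
    linarith [h3]
  have hcxval : Real.cosh dx = a / px := by
    rw [hsxval] at hcothx
    field_simp at hcothx ⊢
    have h : Real.cosh dx * px * s = a * s := by linear_combination s * hcothx
    have h2 := mul_right_cancel₀ hs.ne' h
    linarith [h2]
  have hcyval : Real.cosh dy = b / py := by
    rw [hsyval] at hcothy
    field_simp at hcothy ⊢
    have h : Real.cosh dy * py * s = b * s := by linear_combination s * hcothy
    have h2 := mul_right_cancel₀ hs.ne' h
    linarith [h2]
  have hczval : Real.cosh dxy = (a * b - s ^ 2 * Real.cos D) / (px * py) := by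
    rw [hlaw, hcxval, hcyval, hsxval, hsyval]
    rw [eq_div_iff (by positivity : (0:ℝ) < px * py).ne']
    field_simp
  set Q := a ^ 2 + b ^ 2 - 2 * a * b * Real.cos D - s ^ 2 * Real.sin D ^ 2 with hQ
  have hD2 := Real.sin_sq_add_cos_sq D
  have h4 : Real.cosh dxy ^ 2 * (px * py) ^ 2 = (a * b - s ^ 2 * Real.cos D) ^ 2 := by
    rw [hczval]
    field_simp
  have hsz2 : (Real.sinh dxy * (px * py)) ^ 2 = s ^ 2 * Q := by
    rw [hQ]
    linear_combination (-(px * py) ^ 2) * hchz + h4 + py ^ 2 * hax +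
      (a ^ 2 - s ^ 2) * hay + s ^ 4 * hD2
  have hQpos : 0 < Q := by
    have h5 : 0 < (Real.sinh dxy * (px * py)) ^ 2 := by positivity
    rw [hsz2] at h5
    have h6 : 0 < s ^ 2 := by positivity
    by_contra hneg
    push_neg at hneg
    have h7 : s ^ 2 * Q ≤ 0 := mul_nonpos_of_nonneg_of_nonpos h6.le hneg
    exact absurd h5 h7.not_gt
  set q := Real.sqrt Q with hq
  have hqpos : 0 < q := Real.sqrt_pos.mpr hQpos
  have hq2 : q ^ 2 = Q := Real.sq_sqrt hQpos.le
  have hszval : Real.sinh dxy = s * q / (px * py) := by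
    have h2 : (Real.sinh dxy * (px * py)) ^ 2 = (s * q) ^ 2 := by
      rw [hsz2]; rw [mul_pow, hq2]
    have h3 : Real.sinh dxy * (px * py) = s * q :=
      sq_eq_of_pos (mul_pos hsz (mul_pos hpxpos hpypos)) (mul_pos hs hqpos) h2
    field_simp
    linarith [h3]
  -- closed forms for sin Ξ, cos Ξ
  have hsinXi : Real.sin Ξ = px * Real.sin D / q := by
    rw [hΞsin, hsyval, hszval]
    rw [div_eq_div_iff (by positivity) hqpos.ne']
    field_simp
  have hcosXi : Real.cos Ξ = (a * Real.cos D - b) / q := by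
    rw [hΞcos, hcyval, hcxval, hczval, hsxval, hszval]
    rw [div_eq_div_iff (by positivity) hqpos.ne']
    field_simp
    linear_combination (-b) * hax
  -- the RHS square root
  have hsqrtR : Real.sqrt (Real.sin rX * Real.sin (rX + 2 * θ₀) /
      ((a / s) ^ 2 + (b / s) ^ 2 - 2 * (a / s) * (b / s) * Real.cos D -
        Real.sin D ^ 2)) = px * s / q := by
    have hden : (a / s) ^ 2 + (b / s) ^ 2 - 2 * (a / s) * (b / s) * Real.cos D -
        Real.sin D ^ 2 = Q / s ^ 2 := by
      rw [hQ]; field_simp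
    have harg : Real.sin rX * Real.sin (rX + 2 * θ₀) /
        ((a / s) ^ 2 + (b / s) ^ 2 - 2 * (a / s) * (b / s) * Real.cos D -
          Real.sin D ^ 2) = (px * s / q) ^ 2 := by
      rw [hden, ← hpx2, ← hq2]
      field_simp
    rw [harg, Real.sqrt_sq (by positivity)]
  rw [Real.sin_sub, hsinXi, hcosXi, hψcos, hψsin, hsqrtR]
  -- final trig identity (sum to product)
  have key : Real.sin D * Real.cos (rX + θ₀) - Real.cos D * a + b =
      2 * Real.sin ((D - rX + rY) / 2) * Real.cos ((rX + rY - D + θ₀ * 2) / 2) := by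
    have e1 := Real.sin_add ((D - rX + rY) / 2) ((rX + rY - D + θ₀ * 2) / 2)
    have e2 := Real.sin_sub ((D - rX + rY) / 2) ((rX + rY - D + θ₀ * 2) / 2)
    have e3 : (D - rX + rY) / 2 + (rX + rY - D + θ₀ * 2) / 2 = rY + θ₀ := by ring
    have e4 : (D - rX + rY) / 2 - (rX + rY - D + θ₀ * 2) / 2 = D - (rX + θ₀) := by ring
    rw [e3] at e1
    rw [e4, Real.sin_sub] at e2
    rw [ha, hb]
    linarith [e1, e2]
  field_simp
  linear_combination key
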